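/- Let H be a finite-dimensional complex Hilbert space, let {e_b}_{b∈B} be an orthonormal family with |B| = N ≥ 1, fix b₀ ∈ B, set u = N^{-1/2} Σ_b e_b and Π = Σ_{b≠b₀} e_b e_b*. Then for every positive semidefinite operator ρ on H with Tr(ρ) = 1 (a density operator): ⟨u, ρ u⟩ ≤ 2·Tr(Π ρ) + 2/N. -/

import Mathlib

open scoped ComplexConjugate

private lemma trace_smulRight_aux {H : Type*} [NormedAddCommGroup H] [InnerProductSpace ℂ H]
    [FiniteDimensional ℂ H] (f : H →ₗ[ℂ] ℂ) (y : H) :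
    LinearMap.trace ℂ H (f.smulRight y) = f y := by
  classical
  let b := Module.finBasis ℂ H
  rw [LinearMap.trace_eq_matrix_trace ℂ b, Matrix.trace]
  conv_rhs => rw [← b.sum_repr y, map_sum]
  refine Finset.sum_congr rfl fun i _ => ?_
  simp [Matrix.diag, LinearMap.toMatrix_apply, mul_comm, smul_eq_mul]

private lemma trace_onb_aux {H : Type*} [NormedAddCommGroup H] [InnerProductSpace ℂ H]
    [FiniteDimensional ℂ H] {ι : Type*} [Fintype ι] [DecidableEq ι]
    (b : OrthonormalBasis ι ℂ H) (f : H →ₗ[ℂ] H) :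
    LinearMap.trace ℂ H f = ∑ i, (inner ℂ (b i) (f (b i)) : ℂ) := by
  rw [LinearMap.trace_eq_matrix_trace ℂ b.toBasis, Matrix.trace]
  refine Finset.sum_congr rfl fun i _ => ?_
  simp [Matrix.diag, LinearMap.toMatrix_apply, OrthonormalBasis.coe_toBasis,
    OrthonormalBasis.coe_toBasis_repr_apply, OrthonormalBasis.repr_apply_apply]

theorem stmt_6 {H : Type*} [NormedAddCommGroup H] [InnerProductSpace ℂ H]
    [FiniteDimensional ℂ H]
    {B : Type*} [Fintype B] [DecidableEq B] (e : B → H) (he : Orthonormal ℂ e)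
    (b₀ : B) (hN : 1 ≤ Fintype.card B)
    (ρ : H →ₗ[ℂ] H)
    (hsym : ∀ x y : H, (inner ℂ (ρ x) y : ℂ) = inner ℂ x (ρ y))
    (hpos : ∀ x : H, 0 ≤ ((inner ℂ x (ρ x) : ℂ)).re)
    (htr : LinearMap.trace ℂ H ρ = 1) :
    ((inner ℂ ((Real.sqrt (Fintype.card B))⁻¹ • ∑ b, e b)
        (ρ ((Real.sqrt (Fintype.card B))⁻¹ • ∑ b, e b)) : ℂ)).re ≤
      2 * (LinearMap.trace ℂ H
            ((∑ b ∈ Finset.univ.filter (· ≠ b₀),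
              (innerₛₗ ℂ (e b)).smulRight (e b)) ∘ₗ ρ)).re
        + 2 / (Fintype.card B : ℝ) := by
  classical
  set N : ℕ := Fintype.card B with hNdef
  have hN0 : (0:ℝ) < N := by exact_mod_cast hN
  set q : H → ℝ := fun x => ((inner ℂ x (ρ x) : ℂ)).re with hq
  -- hermitian symmetry of real parts
  have hherm : ∀ x y : H, ((inner ℂ y (ρ x) : ℂ)).re = ((inner ℂ x (ρ y) : ℂ)).re := by
    intro x y
    have h1 : (inner ℂ y (ρ x) : ℂ) = conj (inner ℂ x (ρ y) : ℂ) := by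
      rw [← hsym x y, ← inner_conj_symm]
    rw [h1, Complex.conj_re]
  -- expansion of q on sums
  have hexp : ∀ x y : H, q (x + y) = q x + q y + 2 * ((inner ℂ x (ρ y) : ℂ)).re := by
    intro x y
    have : (inner ℂ (x + y) (ρ (x + y)) : ℂ)
        = inner ℂ x (ρ x) + inner ℂ x (ρ y) + inner ℂ y (ρ x) + inner ℂ y (ρ y) := by
      rw [map_add, inner_add_left, inner_add_right, inner_add_right]
      ring
    simp only [hq, this, Complex.add_re]
    rw [hherm x y]; ring
  -- cross term bound
  have hcross : ∀ x y : H, 2 * ((inner ℂ x (ρ y) : ℂ)).re ≤ q x + q y := by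
    intro x y
    have h0 : 0 ≤ q (x + -y) := hpos _
    have hny : q (-y) = q y := by
      simp only [hq, map_neg, inner_neg_neg]
    have hcr : ((inner ℂ x (ρ (-y)) : ℂ)).re = -((inner ℂ x (ρ y) : ℂ)).re := by
      rw [map_neg, inner_neg_right, Complex.neg_re]
    rw [hexp x (-y), hny, hcr] at h0
    linarith
  have hqpos : ∀ x, 0 ≤ q x := hpos
  set S : Finset B := Finset.univ.filter (· ≠ b₀) with hS
  set t : H := ∑ b ∈ S, e b with ht
  -- sum decomposition
  have hsplit : (∑ b, e b) = e b₀ + t := by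
    rw [ht, hS, Finset.filter_ne', ← Finset.add_sum_erase _ e (Finset.mem_univ b₀)]
  -- LHS rewriting
  have hLHS : ((inner ℂ ((Real.sqrt (N:ℝ))⁻¹ • ∑ b, e b)
      (ρ ((Real.sqrt (N:ℝ))⁻¹ • ∑ b, e b)) : ℂ)).re = (q (∑ b, e b)) / N := by
    have hrs : ∀ z : H, (Real.sqrt (N:ℝ))⁻¹ • z
        = (((Real.sqrt (N:ℝ))⁻¹ : ℝ) : ℂ) • z := fun z => (algebraMap_smul ℂ _ z).symm
    rw [hrs, map_smul, inner_smul_left, inner_smul_right, ← mul_assoc, Complex.conj_ofReal,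
      ← Complex.ofReal_mul, ← mul_inv, Real.mul_self_sqrt hN0.le]
    rw [Complex.re_ofReal_mul]
    field_simp [hq]
    rfl
  -- trace of Π ρ
  have htrPi : LinearMap.trace ℂ H ((∑ b ∈ S, (innerₛₗ ℂ (e b)).smulRight (e b)) ∘ₗ ρ)
      = ∑ b ∈ S, (inner ℂ (e b) (ρ (e b)) : ℂ) := by
    have hsumcomp : (∑ b ∈ S, (innerₛₗ ℂ (e b)).smulRight (e b)) ∘ₗ ρ
        = ∑ b ∈ S, ((innerₛₗ ℂ (e b)).smulRight (e b)) ∘ₗ ρ := by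
      ext z
      simp [LinearMap.sum_apply]
    rw [hsumcomp, map_sum]
    refine Finset.sum_congr rfl fun b _ => ?_
    have hcomp : ((innerₛₗ ℂ (e b)).smulRight (e b)) ∘ₗ ρ
        = ((innerₛₗ ℂ (e b)) ∘ₗ ρ).smulRight (e b) := rfl
    rw [hcomp, trace_smulRight_aux]
    rfl
  have htrPiRe : (LinearMap.trace ℂ H
      ((∑ b ∈ S, (innerₛₗ ℂ (e b)).smulRight (e b)) ∘ₗ ρ)).re = ∑ b ∈ S, q (e b) := by
    rw [htrPi, Complex.re_sum]
  -- bound on q (e b₀)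
  have hEb0 : q (e b₀) ≤ 1 := by
    obtain ⟨u, bonb, hsub, hcoe⟩ := (he.toSubtypeRange).exists_orthonormalBasis_extension
    have h1 : (1:ℝ) = ∑ i : u, q (bonb i) := by
      have h0 := trace_onb_aux bonb ρ
      rw [htr] at h0
      have h2 : ((1:ℂ)).re = (∑ i : u, (inner ℂ (bonb i) (ρ (bonb i)) : ℂ)).re := by rw [← h0]
      simpa [Complex.re_sum, hq] using h2
    have hmem : e b₀ ∈ u := hsub (Set.mem_range_self b₀)
    have h3 : q (bonb ⟨e b₀, hmem⟩) ≤ ∑ i : u, q (bonb i) :=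
      Finset.single_le_sum (fun i _ => hqpos _) (Finset.mem_univ _)
    have h4 : bonb ⟨e b₀, hmem⟩ = e b₀ := by rw [hcoe]
    rw [h4] at h3
    linarith
  -- bound on q t
  have hqt : q t ≤ (S.card : ℝ) * ∑ b ∈ S, q (e b) := by
    have hexps : (inner ℂ t (ρ t) : ℂ) = ∑ b ∈ S, ∑ c ∈ S, (inner ℂ (e b) (ρ (e c)) : ℂ) := by
      rw [ht, map_sum, sum_inner]
      exact Finset.sum_congr rfl fun b _ => inner_sum _ _ _
    have h1 : q t = ∑ b ∈ S, ∑ c ∈ S, ((inner ℂ (e b) (ρ (e c)) : ℂ)).re := by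
      simp only [hq, hexps, Complex.re_sum]
    rw [h1]
    calc ∑ b ∈ S, ∑ c ∈ S, ((inner ℂ (e b) (ρ (e c)) : ℂ)).re
        ≤ ∑ b ∈ S, ∑ c ∈ S, (q (e b) + q (e c)) / 2 := by
          refine Finset.sum_le_sum fun b _ => Finset.sum_le_sum fun c _ => ?_
          have := hcross (e b) (e c)
          linarith
      _ = (S.card : ℝ) * ∑ b ∈ S, q (e b) := by
          have h2 : ∀ b : B, ∑ c ∈ S, (q (e b) + q (e c)) / 2
              = (S.card : ℝ) * (q (e b) / 2) + (∑ c ∈ S, q (e c)) / 2 := by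
            intro b
            rw [Finset.sum_div]
            simp [add_div, Finset.sum_add_distrib, Finset.sum_const, nsmul_eq_mul,
              Finset.sum_div]
          rw [Finset.sum_congr rfl fun b _ => h2 b, Finset.sum_add_distrib,
            Finset.sum_const, nsmul_eq_mul, ← Finset.mul_sum, ← Finset.sum_div]
          ring
  -- assembling
  have hcard : (S.card : ℝ) ≤ (N : ℝ) := by
    have : S.card ≤ N := by
      rw [hNdef, ← Finset.card_univ]
      exact Finset.card_le_card (Finset.subset_univ S)
    exact_mod_cast this
  have hq0 : 0 ≤ ∑ b ∈ S, q (e b) := Finset.sum_nonneg fun b _ => hqpos _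
  have hmain : q (∑ b, e b) ≤ 2 * q (e b₀) + 2 * q t := by
    rw [hsplit, hexp]
    have := hcross (e b₀) t
    linarith
  have h1 : q t ≤ (N : ℝ) * ∑ b ∈ S, q (e b) :=
    hqt.trans (mul_le_mul_of_nonneg_right hcard hq0)
  rw [hLHS, htrPiRe, div_le_iff₀ hN0]
  have h2 : (2 / (N:ℝ)) * N = 2 := by field_simp
  nlinarith [hmain, hEb0, h1]
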